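/- Let λ be a partition, k ≥ 1 an integer, and h an integer with 0 ≤ h ≤ k−1. Then the number of partitions μ ⊇ λ such that μ/λ is a ribbon of size k and height h is exactly one more than the number of partitions ν ⊆ λ such that λ/ν is a ribbon of size k and height h. -/

import Mathlib

/-- Two cells of `ℕ × ℕ` are adjacent when they share a side. -/
def CellAdj (a b : ℕ × ℕ) : Prop :=
  (a.1 = b.1 ∧ (a.2 + 1 = b.2 ∨ b.2 + 1 = a.2)) ∨
  (a.2 = b.2 ∧ (a.1 + 1 = b.1 ∨ b.1 + 1 = a.1))

/-- A finite set of cells is connected if any two of its cells are joined by a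
path of cells of the set, consecutive ones sharing a side. -/
def ConnectedCells (S : Finset (ℕ × ℕ)) : Prop :=
  ∀ a ∈ S, ∀ b ∈ S,
    Relation.ReflTransGen (fun x y => x ∈ S ∧ y ∈ S ∧ CellAdj x y) a b

/-- `S` contains no 2 × 2 square of cells. -/
def NoTwoByTwo (S : Finset (ℕ × ℕ)) : Prop :=
  ¬ ∃ i j : ℕ, (i, j) ∈ S ∧ (i + 1, j) ∈ S ∧ (i, j + 1) ∈ S ∧ (i + 1, j + 1) ∈ S

/-- The cells of the skew shape `μ / ν` (`ν` first argument, `μ` second). -/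
def skewCells (ν μ : YoungDiagram) : Finset (ℕ × ℕ) :=
  μ.cells \ ν.cells

/-- `μ / ν` is a ribbon: a nonempty connected skew shape with no 2 × 2 square. -/
def IsRibbon (ν μ : YoungDiagram) : Prop :=
  ν ≤ μ ∧ (skewCells ν μ).Nonempty ∧ ConnectedCells (skewCells ν μ) ∧
    NoTwoByTwo (skewCells ν μ)

/-- The height of the skew shape `μ / ν`: the number of rows it occupies, minus one. -/
def skewHeight (ν μ : YoungDiagram) : ℕ :=
  ((skewCells ν μ).image Prod.fst).card - 1

/-- The sign of the skew shape `μ / ν`, i.e. `(-1) ^ height`. -/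
def skewSign (ν μ : YoungDiagram) : ℤ :=
  (-1) ^ skewHeight ν μ

namespace SW

open YoungDiagram Finset

lemma le_iff_rowLen {ν μ : YoungDiagram} : ν ≤ μ ↔ ∀ i, ν.rowLen i ≤ μ.rowLen i := by
  constructor
  · intro h i
    by_contra hc
    push_neg at hc
    have : (i, μ.rowLen i) ∈ ν := mem_iff_lt_rowLen.2 hc
    have := YoungDiagram.cells_subset_iff.2 h this
    simp [YoungDiagram.mem_cells, mem_iff_lt_rowLen] at this
  · intro h
    rw [← YoungDiagram.cells_subset_iff]
    intro c hc
    obtain ⟨i, j⟩ := c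
    simp only [YoungDiagram.mem_cells, mem_iff_lt_rowLen] at *
    exact lt_of_lt_of_le hc (h i)

lemma rowLen_eq_of {μ : YoungDiagram} {i m : ℕ} (h : ∀ j, (i, j) ∈ μ ↔ j < m) :
    μ.rowLen i = m := by
  rcases lt_trichotomy (μ.rowLen i) m with hlt | he | hgt
  · have := (h (μ.rowLen i)).2 hlt
    rw [mem_iff_lt_rowLen] at this; omega
  · exact he
  · have := (h m).1 (mem_iff_lt_rowLen.2 hgt)
    omega

lemma yd_ext {μ ν : YoungDiagram} (h : ∀ i, μ.rowLen i = ν.rowLen i) : μ = ν := by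
  have : μ.cells = ν.cells := by
    ext c
    obtain ⟨i, j⟩ := c
    simp only [YoungDiagram.mem_cells, mem_iff_lt_rowLen, h]
  cases μ; cases ν; simpa using this

/-- Construct a Young diagram from an eventually-zero weakly decreasing function. -/
def ofFn (g : ℕ → ℕ) (hg : ∀ i, g (i + 1) ≤ g i) (T : ℕ) (hT : ∀ i, T ≤ i → g i = 0) :
    YoungDiagram where
  cells := (Finset.range T ×ˢ Finset.range (g 0)).filter fun c => c.2 < g c.1
  isLowerSet := by
    have mono : Antitone g := antitone_nat_of_succ_le hg
    rintro ⟨i2, j2⟩ ⟨i1, j1⟩ ⟨hi, hj⟩ hc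
    simp only [Finset.coe_filter, Finset.mem_coe, Finset.mem_product, Finset.mem_range,
      Set.mem_setOf_eq] at *
    have h1 : j1 < g i1 := lt_of_le_of_lt hj (lt_of_lt_of_le hc.2 (mono hi))
    refine ⟨⟨?_, lt_of_lt_of_le h1 (mono (Nat.zero_le _))⟩, h1⟩
    by_contra hcon
    push_neg at hcon
    rw [hT i1 hcon] at h1; omega

lemma mem_ofFn {g : ℕ → ℕ} {hg : ∀ i, g (i + 1) ≤ g i} {T : ℕ}
    {hT : ∀ i, T ≤ i → g i = 0} {i j : ℕ} : (i, j) ∈ ofFn g hg T hT ↔ j < g i := by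
  have mono : Antitone g := antitone_nat_of_succ_le hg
  constructor
  · intro h
    change (i, j) ∈ (ofFn g hg T hT).cells at h
    simp only [ofFn, YoungDiagram.mem_mk, Finset.mem_filter] at h
    exact h.2
  · intro h
    change (i, j) ∈ (ofFn g hg T hT).cells
    simp only [ofFn, YoungDiagram.mem_mk, Finset.mem_filter, Finset.mem_product,
      Finset.mem_range]
    refine ⟨⟨?_, lt_of_lt_of_le h (mono (Nat.zero_le _))⟩, h⟩
    by_contra hcon
    push_neg at hcon
    rw [hT i hcon] at h; omega

lemma rowLen_ofFn {g : ℕ → ℕ} {hg : ∀ i, g (i + 1) ≤ g i} {T : ℕ}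
    {hT : ∀ i, T ≤ i → g i = 0} (i : ℕ) : (ofFn g hg T hT).rowLen i = g i :=
  rowLen_eq_of fun _ => mem_ofFn

lemma rowLen_zero_of_colLen {μ : YoungDiagram} {i : ℕ} (h : μ.colLen 0 ≤ i) :
    μ.rowLen i = 0 := by
  by_contra hc
  have : (i, 0) ∈ μ := mem_iff_lt_rowLen.2 (Nat.pos_of_ne_zero hc)
  rw [mem_iff_lt_colLen] at this
  omega

lemma mem_skew {ν μ : YoungDiagram} {i j : ℕ} :
    (i, j) ∈ skewCells ν μ ↔ ν.rowLen i ≤ j ∧ j < μ.rowLen i := by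
  simp only [skewCells, Finset.mem_sdiff, YoungDiagram.mem_cells, mem_iff_lt_rowLen]
  omega

lemma cellAdj_symm {a b : ℕ × ℕ} (h : CellAdj a b) : CellAdj b a := by
  unfold CellAdj at *; omega

lemma symm_step {S : Finset (ℕ × ℕ)} :
    Symmetric (fun x y => x ∈ S ∧ y ∈ S ∧ CellAdj x y) := by
  intro x y ⟨h1, h2, h3⟩
  exact ⟨h2, h1, cellAdj_symm h3⟩

lemma rtg_symm {S : Finset (ℕ × ℕ)} {a b : ℕ × ℕ}
    (h : Relation.ReflTransGen (fun x y => x ∈ S ∧ y ∈ S ∧ CellAdj x y) a b) :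
    Relation.ReflTransGen (fun x y => x ∈ S ∧ y ∈ S ∧ CellAdj x y) b a := by
  haveI : Std.Symm (fun x y : ℕ × ℕ => x ∈ S ∧ y ∈ S ∧ CellAdj x y) :=
    ⟨fun _ _ h => symm_step h⟩
  exact Std.Symm.symm _ _ h

lemma rows_covered {S : Finset (ℕ × ℕ)} {a b : ℕ × ℕ}
    (hp : Relation.ReflTransGen (fun x y => x ∈ S ∧ y ∈ S ∧ CellAdj x y) a b)
    (ha : a ∈ S) : ∀ i, a.1 ≤ i → i ≤ b.1 → ∃ c ∈ S, c.1 = i := by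
  induction hp with
  | refl => intro i h1 h2; exact ⟨a, ha, by omega⟩
  | @tail b' b _ hstep ih =>
      intro i h1 h2
      obtain ⟨hb'S, hbS, hadj⟩ := hstep
      rcases le_or_gt i b'.1 with hle | hlt
      · exact ih i h1 hle
      · have : b.1 ≤ b'.1 + 1 := by unfold CellAdj at hadj; omega
        exact ⟨b, hbS, by omega⟩

lemma crossing {S : Finset (ℕ × ℕ)} {a b : ℕ × ℕ}
    (hp : Relation.ReflTransGen (fun x y => x ∈ S ∧ y ∈ S ∧ CellAdj x y) a b)
    : ∀ i, a.1 ≤ i → i < b.1 → ∃ j, (i, j) ∈ S ∧ (i + 1, j) ∈ S := by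
  induction hp with
  | refl => intro i h1 h2; omega
  | @tail b' b _ hstep ih =>
      intro i h1 h2
      obtain ⟨hb'S, hbS, hadj⟩ := hstep
      rcases lt_or_ge i b'.1 with hlt | hle
      · exact ih i h1 hlt
      · have hb1 : b.1 = b'.1 + 1 ∧ b'.1 = i := by unfold CellAdj at hadj; omega
        have hsnd : b'.2 = b.2 := by unfold CellAdj at hadj; omega
        have e1 : b' = (i, b'.2) := Prod.ext (by omega) rfl
        have e2 : b = (i + 1, b'.2) := Prod.ext (by omega) (by omega)
        exact ⟨b'.2, e1 ▸ hb'S, e2 ▸ hbS⟩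

/-- The structural description of a ribbon via row lengths. -/
def Struct (ν μ : YoungDiagram) (r s : ℕ) : Prop :=
  r ≤ s ∧ (∀ i, i < r ∨ s < i → μ.rowLen i = ν.rowLen i) ∧
  (∀ i, r ≤ i → i ≤ s → ν.rowLen i < μ.rowLen i) ∧
  (∀ i, r ≤ i → i < s → μ.rowLen (i + 1) = ν.rowLen i + 1)

lemma ribbon_struct {ν μ : YoungDiagram} (hR : IsRibbon ν μ) : ∃ r s, Struct ν μ r s := by
  obtain ⟨hle, hne, hconn, h22⟩ := hR
  set S := skewCells ν μ with hS
  have rowLe : ∀ i, ν.rowLen i ≤ μ.rowLen i := le_iff_rowLen.1 hle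
  have hRne : (S.image Prod.fst).Nonempty := hne.image _
  set r := (S.image Prod.fst).min' hRne with hr
  set s := (S.image Prod.fst).max' hRne with hs
  have occ_of : ∀ i, i ∈ S.image Prod.fst → ν.rowLen i < μ.rowLen i := by
    intro i hi
    obtain ⟨c, hc, hc1⟩ := Finset.mem_image.1 hi
    obtain ⟨i', j⟩ := c
    simp only at hc1; subst hc1
    have := mem_skew.1 hc
    omega
  have of_occ : ∀ i, ν.rowLen i < μ.rowLen i → i ∈ S.image Prod.fst := by
    intro i hi
    exact Finset.mem_image.2 ⟨(i, ν.rowLen i), mem_skew.2 ⟨le_refl _, hi⟩, rfl⟩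
  obtain ⟨a, haS, ha1⟩ : ∃ a ∈ S, a.1 = r := by
    obtain ⟨c, hc, h⟩ := Finset.mem_image.1 ((S.image Prod.fst).min'_mem hRne)
    exact ⟨c, hc, h⟩
  obtain ⟨b, hbS, hb1⟩ : ∃ b ∈ S, b.1 = s := by
    obtain ⟨c, hc, h⟩ := Finset.mem_image.1 ((S.image Prod.fst).max'_mem hRne)
    exact ⟨c, hc, h⟩
  have hpath := hconn a haS b hbS
  have hrs : r ≤ s := Finset.min'_le _ _ ((S.image Prod.fst).max'_mem hRne)
  refine ⟨r, s, hrs, ?_, ?_, ?_⟩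
  · intro i hi
    have : i ∉ S.image Prod.fst := by
      intro hmem
      have h1 := Finset.min'_le _ _ hmem
      have h2 := Finset.le_max' _ _ hmem
      omega
    have hle2 := rowLe i
    by_contra hc
    exact this (of_occ i (by omega))
  · intro i h1 h2
    have : ∃ c ∈ S, c.1 = i := rows_covered hpath haS i (by omega) (by omega)
    obtain ⟨c, hc, hc1⟩ := this
    exact occ_of i (Finset.mem_image.2 ⟨c, hc, hc1⟩)
  · intro i h1 h2
    obtain ⟨j, hj1, hj2⟩ := crossing hpath i (by omega) (by omega)
    have m1 := mem_skew.1 hj1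
    have m2 := mem_skew.1 hj2
    -- lower bound: μ.rowLen (i+1) ≥ ν.rowLen i + 1
    have hlow : ν.rowLen i < μ.rowLen (i + 1) := by omega
    -- upper bound via no 2x2
    by_contra hc
    have hup : ν.rowLen i + 2 ≤ μ.rowLen (i + 1) := by omega
    apply h22
    refine ⟨i, ν.rowLen i, ?_, ?_, ?_, ?_⟩ <;> rw [mem_skew]
    · have := μ.rowLen_anti i (i + 1) (by omega)
      omega
    · have := ν.rowLen_anti i (i + 1) (by omega)
      omega
    · have := μ.rowLen_anti i (i + 1) (by omega)
      omega
    · have := ν.rowLen_anti i (i + 1) (by omega)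
      omega

section StructConsequences

variable {ν μ : YoungDiagram} {r s : ℕ}

lemma struct_cell_mem (hst : Struct ν μ r s) {c : ℕ × ℕ} (hc : c ∈ skewCells ν μ) :
    r ≤ c.1 ∧ c.1 ≤ s ∧ ν.rowLen c.1 ≤ c.2 ∧ c.2 < μ.rowLen c.1 := by
  obtain ⟨i, j⟩ := c
  have hm := mem_skew.1 hc
  obtain ⟨hrs, hout, hocc, hrib⟩ := hst
  have h1 : ¬ (i < r ∨ s < i) := by
    intro h
    have := hout i h
    omega
  exact ⟨by omega, by omega, hm.1, hm.2⟩

lemma struct_le (hst : Struct ν μ r s) : ν ≤ μ := by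
  rw [le_iff_rowLen]
  intro i
  obtain ⟨hrs, hout, hocc, hrib⟩ := hst
  rcases lt_or_ge i r with h | h
  · exact (hout i (Or.inl h)).ge
  rcases le_or_gt i s with h2 | h2
  · exact (hocc i h h2).le
  · exact (hout i (Or.inr h2)).ge

lemma struct_hor (hst : Struct ν μ r s) (i j d : ℕ) (h1 : (i, j) ∈ skewCells ν μ)
    (h2 : (i, j + d) ∈ skewCells ν μ) :
    Relation.ReflTransGen (fun x y => x ∈ skewCells ν μ ∧ y ∈ skewCells ν μ ∧ CellAdj x y)
      (i, j) (i, j + d) := by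
  induction d with
  | zero => exact Relation.ReflTransGen.refl
  | succ d ih =>
      have m1 := mem_skew.1 h1
      have m2 := mem_skew.1 h2
      have hmid : (i, j + d) ∈ skewCells ν μ := mem_skew.2 ⟨by omega, by omega⟩
      refine Relation.ReflTransGen.tail (ih hmid) ?_
      exact ⟨hmid, h2, Or.inl ⟨rfl, Or.inl rfl⟩⟩

lemma struct_hor' (hst : Struct ν μ r s) (i j j' : ℕ) (h1 : (i, j) ∈ skewCells ν μ)
    (h2 : (i, j') ∈ skewCells ν μ) :
    Relation.ReflTransGen (fun x y => x ∈ skewCells ν μ ∧ y ∈ skewCells ν μ ∧ CellAdj x y)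
      (i, j) (i, j') := by
  rcases le_or_gt j j' with h | h
  · have : j' = j + (j' - j) := by omega
    rw [this]
    exact struct_hor hst i j (j' - j) h1 (by rwa [← this])
  · have : j = j' + (j - j') := by omega
    refine rtg_symm ?_
    rw [this]
    exact struct_hor hst i j' (j - j') h2 (by rwa [← this])

lemma struct_toBase (hst : Struct ν μ r s) :
    ∀ n (c : ℕ × ℕ), c ∈ skewCells ν μ → c.1 = n →
    Relation.ReflTransGen (fun x y => x ∈ skewCells ν μ ∧ y ∈ skewCells ν μ ∧ CellAdj x y)
      c (r, ν.rowLen r) := by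
  intro n
  induction n using Nat.strong_induction_on with
  | _ n ih =>
    intro c hc hc1
    obtain ⟨i, j⟩ := c
    simp only at hc1
    subst hc1
    have hcm := struct_cell_mem hst hc
    obtain ⟨hrs, hout, hocc, hrib⟩ := hst
    rcases Nat.eq_or_lt_of_le hcm.1 with he | hlt
    · have hbase : (i, ν.rowLen i) ∈ skewCells ν μ :=
        mem_skew.2 ⟨le_refl _, hocc i hcm.1 hcm.2.1⟩
      have hp := struct_hor' ⟨hrs, hout, hocc, hrib⟩ i j (ν.rowLen i) hc hbase
      rw [he]
      exact hp
    · -- i > r, so i = (i-1)+1 with r ≤ i-1 < s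
      have hi1 : r ≤ i - 1 := by omega
      have hi2 : i - 1 < s := by omega
      have heq : μ.rowLen i = ν.rowLen (i - 1) + 1 := by
        have := hrib (i - 1) hi1 hi2
        have h3 : i - 1 + 1 = i := by omega
        rwa [h3] at this
      have hc2 : (i, ν.rowLen (i - 1)) ∈ skewCells ν μ := by
        refine mem_skew.2 ⟨?_, by omega⟩
        exact ν.rowLen_anti (i - 1) i (by omega)
      have hc3 : (i - 1, ν.rowLen (i - 1)) ∈ skewCells ν μ :=
        mem_skew.2 ⟨le_refl _, hocc (i - 1) hi1 (by omega)⟩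
      have p1 := struct_hor' ⟨hrs, hout, hocc, hrib⟩ i j (ν.rowLen (i - 1)) hc hc2
      have p2 : Relation.ReflTransGen
          (fun x y => x ∈ skewCells ν μ ∧ y ∈ skewCells ν μ ∧ CellAdj x y)
          (i, ν.rowLen (i - 1)) (i - 1, ν.rowLen (i - 1)) := by
        refine Relation.ReflTransGen.single ⟨hc2, hc3, Or.inr ⟨rfl, Or.inr (by omega)⟩⟩
      have p3 := ih (i - 1) (by omega) (i - 1, ν.rowLen (i - 1)) hc3 rfl
      exact (p1.trans p2).trans p3

lemma struct_ribbon (hst : Struct ν μ r s) : IsRibbon ν μ := by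
  have hle := struct_le hst
  have hne : (skewCells ν μ).Nonempty := by
    refine ⟨(r, ν.rowLen r), mem_skew.2 ⟨le_refl _, ?_⟩⟩
    exact hst.2.2.1 r (le_refl _) hst.1
  refine ⟨hle, hne, ?_, ?_⟩
  · intro a ha b hb
    have pa := struct_toBase hst a.1 a ha rfl
    have pb := struct_toBase hst b.1 b hb rfl
    exact pa.trans (rtg_symm pb)
  · rintro ⟨i, j, h1, h2, h3, h4⟩
    have c1 := struct_cell_mem hst h1
    have c4 := struct_cell_mem hst h4
    simp only at c1 c4
    have heq : μ.rowLen (i + 1) = ν.rowLen i + 1 := hst.2.2.2 i c1.1 (by omega)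
    have m1 := mem_skew.1 h1
    have m4 := mem_skew.1 h4
    omega

lemma struct_rows (hst : Struct ν μ r s) :
    (skewCells ν μ).image Prod.fst = Finset.Icc r s := by
  ext i
  simp only [Finset.mem_image, Finset.mem_Icc]
  constructor
  · rintro ⟨c, hc, rfl⟩
    have := struct_cell_mem hst hc
    exact ⟨this.1, this.2.1⟩
  · rintro ⟨h1, h2⟩
    exact ⟨(i, ν.rowLen i), mem_skew.2 ⟨le_refl _, hst.2.2.1 i h1 h2⟩, rfl⟩

lemma struct_height (hst : Struct ν μ r s) : skewHeight ν μ = s - r := by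
  rw [skewHeight, struct_rows hst, Nat.card_Icc]
  omega

lemma struct_card (hst : Struct ν μ r s) :
    (skewCells ν μ).card + ν.rowLen s = μ.rowLen r + (s - r) := by
  classical
  have hrs : r ≤ s := hst.1
  have hfib : (skewCells ν μ).card =
      ∑ i ∈ Finset.Icc r s, ((skewCells ν μ).filter fun c => c.1 = i).card := by
    refine Finset.card_eq_sum_card_fiberwise ?_
    intro c hc
    have := struct_cell_mem hst hc
    exact Finset.mem_Icc.2 ⟨this.1, this.2.1⟩
  have hfibcard : ∀ i, ((skewCells ν μ).filter fun c => c.1 = i).card =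
      μ.rowLen i - ν.rowLen i := by
    intro i
    have : ((skewCells ν μ).filter fun c => c.1 = i) =
        (Finset.Ico (ν.rowLen i) (μ.rowLen i)).map
          ⟨fun j => (i, j), fun a b h => by simpa using h⟩ := by
      ext c
      obtain ⟨i', j⟩ := c
      simp only [Finset.mem_filter, Finset.mem_map, Finset.mem_Ico, mem_skew,
        Function.Embedding.coeFn_mk, Prod.mk.injEq]
      constructor
      · rintro ⟨⟨hm1, hm2⟩, rfl⟩
        exact ⟨j, ⟨hm1, hm2⟩, rfl⟩
      · rintro ⟨j', ⟨hm1, hm2⟩, hp⟩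
        obtain ⟨rfl, rfl⟩ := Prod.mk.inj (hp : (i, j') = (i', j))
        exact ⟨⟨hm1, hm2⟩, rfl⟩
    rw [this, Finset.card_map, Nat.card_Ico]
  have key : ∀ d, r + d ≤ s →
      (∑ i ∈ Finset.Icc r (r + d), (μ.rowLen i - ν.rowLen i)) + ν.rowLen (r + d)
        = μ.rowLen r + d := by
    intro d
    induction d with
    | zero =>
        intro _
        simp only [Nat.add_zero, Finset.Icc_self, Finset.sum_singleton]
        have := hst.2.2.1 r (le_refl _) hst.1
        omega
    | succ d ih =>
        intro hd
        have h1 := ih (by omega)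
        have h2 : μ.rowLen (r + d + 1) = ν.rowLen (r + d) + 1 :=
          hst.2.2.2 (r + d) (by omega) (by omega)
        have h3 : ν.rowLen (r + d + 1) < μ.rowLen (r + d + 1) :=
          hst.2.2.1 (r + d + 1) (by omega) (by omega)
        rw [show r + (d + 1) = (r + d) + 1 by omega,
          Finset.sum_Icc_succ_top (by omega : r ≤ r + d + 1)]
        omega
  have := key (s - r) (by omega)
  rw [hfib]
  simp_rw [hfibcard]
  rw [show r + (s - r) = s by omega] at this
  omega

end StructConsequences

variable (lam : YoungDiagram) (h m : ℕ)

/-- condition for an addable ribbon of height `h`, size `h+m`, with rows `s-h .. s`. -/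
def AddCond (s : ℕ) : Prop :=
  h ≤ s ∧ lam.rowLen (s - h) < lam.rowLen s + m ∧
    (h < s → lam.rowLen s + m ≤ lam.rowLen (s - h - 1))

instance : DecidablePred (AddCond lam h m) := fun s => by
  unfold AddCond; infer_instance

/-- row lengths of the partition obtained by adding that ribbon. -/
def addG (s : ℕ) : ℕ → ℕ := fun i =>
  if i < s - h then lam.rowLen i
  else if i = s - h then lam.rowLen s + m
  else if i ≤ s then lam.rowLen (i - 1) + 1
  else lam.rowLen i

variable {lam h m}

lemma addG_lt {s i : ℕ} (hi : i < s - h) : addG lam h m s i = lam.rowLen i := by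
  unfold addG; rw [if_pos hi]

lemma addG_r {s : ℕ} : addG lam h m s (s - h) = lam.rowLen s + m := by
  unfold addG; rw [if_neg (lt_irrefl _), if_pos rfl]

lemma addG_mid {s i : ℕ} (h1 : s - h < i) (h2 : i ≤ s) :
    addG lam h m s i = lam.rowLen (i - 1) + 1 := by
  unfold addG; rw [if_neg (by omega), if_neg (by omega), if_pos h2]

lemma addG_gt {s i : ℕ} (h1 : s < i) : addG lam h m s i = lam.rowLen i := by
  unfold addG; rw [if_neg (by omega), if_neg (by omega), if_neg (by omega)]

lemma addG_anti {s : ℕ} (hc : AddCond lam h m s) (i : ℕ) :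
    addG lam h m s (i + 1) ≤ addG lam h m s i := by
  obtain ⟨h1, h2, h3⟩ := hc
  rcases lt_trichotomy (i + 1) (s - h) with c1 | c1 | c1
  · rw [addG_lt c1, addG_lt (by omega)]
    exact lam.rowLen_anti _ _ (by omega)
  · rw [c1, addG_r, addG_lt (by omega)]
    have he : i = s - h - 1 := by omega
    rw [he]
    exact h3 (by omega)
  · -- i + 1 > s - h, so i ≥ s - h
    rcases eq_or_lt_of_le (by omega : s - h ≤ i) with c2 | c2
    · -- i = s - h
      rcases le_or_gt (i + 1) s with c3 | c3
      · have ha : addG lam h m s i = lam.rowLen s + m := by rw [← c2, addG_r]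
        rw [addG_mid c1 c3, ha]
        have e : i + 1 - 1 = s - h := by omega
        rw [e]
        omega
      · have ha : addG lam h m s i = lam.rowLen s + m := by rw [← c2, addG_r]
        rw [addG_gt c3, ha]
        have := lam.rowLen_anti s (i + 1) (by omega)
        omega
    · rcases le_or_gt (i + 1) s with c3 | c3
      · rw [addG_mid c1 c3, addG_mid c2 (by omega)]
        have := lam.rowLen_anti (i - 1) (i + 1 - 1) (by omega)
        omega
      · rcases le_or_gt i s with c4 | c4
        · rw [addG_gt c3, addG_mid c2 c4]
          have := lam.rowLen_anti (i - 1) (i + 1) (by omega)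
          omega
        · rw [addG_gt c3, addG_gt c4]
          exact lam.rowLen_anti _ _ (by omega)

lemma addG_zero {s : ℕ} (i : ℕ) (hi : s + 1 + lam.colLen 0 ≤ i) :
    addG lam h m s i = 0 := by
  rw [addG_gt (by omega)]
  exact rowLen_zero_of_colLen (by omega)

variable (lam h m)

/-- the partition obtained by adding the ribbon with bottom row `s`. -/
noncomputable def addMu (s : ℕ) : YoungDiagram :=
  if hc : AddCond lam h m s then
    ofFn (addG lam h m s) (addG_anti hc) (s + 1 + lam.colLen 0) (addG_zero)
  else ⊥

variable {lam h m}

lemma addMu_rowLen {s : ℕ} (hc : AddCond lam h m s) (i : ℕ) :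
    (addMu lam h m s).rowLen i = addG lam h m s i := by
  unfold addMu; rw [dif_pos hc]; exact rowLen_ofFn i

section AddSide

variable {lam : YoungDiagram} {h m : ℕ}

lemma addMu_struct {s : ℕ} (hc : AddCond lam h m s) :
    Struct lam (addMu lam h m s) (s - h) s := by
  obtain ⟨h1, h2, h3⟩ := hc
  have hc' : AddCond lam h m s := ⟨h1, h2, h3⟩
  refine ⟨by omega, ?_, ?_, ?_⟩
  · intro i hi
    rcases hi with hi | hi
    · rw [addMu_rowLen hc', addG_lt hi]
    · rw [addMu_rowLen hc', addG_gt hi]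
  · intro i hi1 hi2
    rw [addMu_rowLen hc']
    rcases eq_or_lt_of_le hi1 with he | hlt
    · rw [← he, addG_r, he]
      have e2 : lam.rowLen i ≤ lam.rowLen (s - h) := by rw [← he]
      omega
    · rw [addG_mid hlt hi2]
      have := lam.rowLen_anti (i - 1) i (by omega)
      omega
  · intro i hi1 hi2
    rw [addMu_rowLen hc', addG_mid (by omega) (by omega)]
    simp

lemma addMu_ribbon {s : ℕ} (hc : AddCond lam h m s) (hm : 1 ≤ m) :
    IsRibbon lam (addMu lam h m s) :=
  struct_ribbon (addMu_struct hc)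

lemma addMu_height {s : ℕ} (hc : AddCond lam h m s) :
    skewHeight lam (addMu lam h m s) = h := by
  rw [struct_height (addMu_struct hc)]
  have := hc.1
  omega

lemma addMu_card {s : ℕ} (hc : AddCond lam h m s) :
    (skewCells lam (addMu lam h m s)).card = h + m := by
  have := struct_card (addMu_struct hc)
  rw [addMu_rowLen hc, addG_r] at this
  have hs : h ≤ s := hc.1
  omega

lemma addable_eq_addMu {μ : YoungDiagram} (hrib : IsRibbon lam μ)
    (hcard : (skewCells lam μ).card = h + m) (hht : skewHeight lam μ = h) :
    ∃ s, AddCond lam h m s ∧ μ = addMu lam h m s := by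
  obtain ⟨r, s, hst⟩ := ribbon_struct hrib
  have hrs : r ≤ s := hst.1
  have hht' := struct_height hst
  have hcd := struct_card hst
  rw [hht] at hht'
  -- h = s - r
  have hr : r = s - h := by omega
  have hhs : h ≤ s := by omega
  rw [hcard] at hcd
  -- μ.rowLen r = lam.rowLen s + m
  have hmur : μ.rowLen r = lam.rowLen s + m := by omega
  have hocc := hst.2.2.1
  have hout := hst.2.1
  have hribb := hst.2.2.2
  have hcond : AddCond lam h m s := by
    refine ⟨hhs, ?_, ?_⟩
    · have := hocc r (le_refl _) hrs
      rw [hmur] at this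
      rw [← hr]
      exact this
    · intro hlt
      have hr1 : 1 ≤ r := by omega
      have e1 : μ.rowLen (r - 1) = lam.rowLen (r - 1) := hout (r - 1) (Or.inl (by omega))
      have e2 : μ.rowLen r ≤ μ.rowLen (r - 1) := μ.rowLen_anti _ _ (by omega)
      rw [hmur, e1] at e2
      have e3 : s - h - 1 = r - 1 := by omega
      rw [e3]
      exact e2
  refine ⟨s, hcond, ?_⟩
  apply yd_ext
  intro i
  rw [addMu_rowLen hcond]
  rcases lt_trichotomy i (s - h) with c1 | c1 | c1
  · rw [addG_lt c1]
    exact hout i (Or.inl (by omega))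
  · have e : addG lam h m s i = lam.rowLen s + m := by rw [c1, addG_r]
    rw [e, show i = r by omega]
    exact hmur
  · rcases le_or_gt i s with c2 | c2
    · rw [addG_mid c1 c2]
      have := hribb (i - 1) (by omega) (by omega)
      have e : i - 1 + 1 = i := by omega
      rw [e] at this
      rw [this]
    · rw [addG_gt c2]
      exact hout i (Or.inr c2)

lemma addMu_inj {s s' : ℕ} (hc : AddCond lam h m s) (hc' : AddCond lam h m s')
    (he : addMu lam h m s = addMu lam h m s') : s = s' := by
  by_contra hne
  have key : ∀ s1 s2, s1 < s2 → AddCond lam h m s1 → AddCond lam h m s2 →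
      addMu lam h m s1 ≠ addMu lam h m s2 := by
    intro s1 s2 hlt hc1 hc2 heq
    have e1 : (addMu lam h m s1).rowLen s2 = lam.rowLen s2 := by
      rw [addMu_rowLen hc1, addG_gt hlt]
    have e2 : lam.rowLen s2 < (addMu lam h m s2).rowLen s2 :=
      (addMu_struct hc2).2.2.1 s2 (by omega) (le_refl _)
    rw [heq] at e1
    omega
  rcases lt_or_gt_of_ne hne with hlt | hlt
  · exact key s s' hlt hc hc' he
  · exact key s' s hlt hc' hc he.symm

end AddSide

section RemSide

variable (lam : YoungDiagram) (h m : ℕ)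

/-- condition for a removable ribbon of height `h`, size `h+m`, with rows `r .. r+h`. -/
def RemCond (r : ℕ) : Prop :=
  lam.rowLen (r + h + 1) + m ≤ lam.rowLen r ∧ lam.rowLen r < lam.rowLen (r + h) + m

instance : DecidablePred (RemCond lam h m) := fun r => by
  unfold RemCond; infer_instance

/-- row lengths of the partition obtained by removing that ribbon. -/
def remG (r : ℕ) : ℕ → ℕ := fun i =>
  if i < r then lam.rowLen i
  else if i < r + h then lam.rowLen (i + 1) - 1
  else if i = r + h then lam.rowLen r - m
  else lam.rowLen i

variable {lam h m}

lemma remG_lt {r i : ℕ} (hi : i < r) : remG lam h m r i = lam.rowLen i := by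
  unfold remG; rw [if_pos hi]

lemma remG_mid {r i : ℕ} (h1 : r ≤ i) (h2 : i < r + h) :
    remG lam h m r i = lam.rowLen (i + 1) - 1 := by
  unfold remG; rw [if_neg (by omega), if_pos h2]

lemma remG_s {r : ℕ} : remG lam h m r (r + h) = lam.rowLen r - m := by
  unfold remG; rw [if_neg (by omega), if_neg (by omega), if_pos rfl]

lemma remG_gt {r i : ℕ} (h1 : r + h < i) : remG lam h m r i = lam.rowLen i := by
  unfold remG; rw [if_neg (by omega), if_neg (by omega), if_neg (by omega)]

lemma rem_facts {r : ℕ} (hc : RemCond lam h m r) :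
    m ≤ lam.rowLen r ∧ 1 ≤ lam.rowLen (r + h) := by
  obtain ⟨h1, h2⟩ := hc
  have := lam.rowLen_anti (r + h) (r + h + 1) (by omega)
  omega

lemma remG_anti {r : ℕ} (hc : RemCond lam h m r) (i : ℕ) :
    remG lam h m r (i + 1) ≤ remG lam h m r i := by
  obtain ⟨hf1, hf2⟩ := rem_facts hc
  obtain ⟨h1, h2⟩ := hc
  rcases lt_trichotomy (i + 1) r with c1 | c1 | c1
  · rw [remG_lt c1, remG_lt (by omega)]
    exact lam.rowLen_anti _ _ (by omega)
  · -- i + 1 = r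
    rcases Nat.eq_zero_or_pos h with hz | hz
    · -- h = 0 : remG r = lam r - m
      have e : remG lam h m r (i + 1) = lam.rowLen r - m := by
        unfold remG
        rw [if_neg (by omega), if_neg (by omega), if_pos (by omega)]
      rw [e, remG_lt (by omega)]
      have := lam.rowLen_anti i r (by omega)
      omega
    · have e : remG lam h m r (i + 1) = lam.rowLen (r + 1) - 1 := by
        rw [c1, remG_mid (le_refl _) (by omega)]
      rw [e, remG_lt (by omega)]
      have := lam.rowLen_anti i (r + 1) (by omega)
      omega
  · rcases lt_or_ge (i + 1) (r + h) with c2 | c2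
    · rw [remG_mid (by omega) c2, remG_mid (by omega) (by omega)]
      have : lam.rowLen (i + 1 + 1) ≤ lam.rowLen (i + 1) := lam.rowLen_anti _ _ (by omega)
      omega
    · rcases eq_or_lt_of_le c2 with c3 | c3
      · -- i + 1 = r + h  (h ≥ 1 since i+1 > r)
        have e : remG lam h m r (i + 1) = lam.rowLen r - m := by rw [← c3, remG_s]
        rw [e, remG_mid (by omega) (by omega)]
        have e2 : lam.rowLen (i + 1) = lam.rowLen (r + h) := by rw [c3]
        omega
      · rcases eq_or_lt_of_le (by omega : r + h ≤ i) with c4 | c4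
        · have e : remG lam h m r i = lam.rowLen r - m := by rw [← c4, remG_s]
          rw [remG_gt (by omega), e]
          have e2 : lam.rowLen (i + 1) ≤ lam.rowLen (r + h + 1) :=
            lam.rowLen_anti _ _ (by omega)
          omega
        · rw [remG_gt (by omega), remG_gt c4]
          exact lam.rowLen_anti _ _ (by omega)

lemma remG_zero {r : ℕ} (i : ℕ) (hi : r + h + 1 + lam.colLen 0 ≤ i) :
    remG lam h m r i = 0 := by
  rw [remG_gt (by omega)]
  exact rowLen_zero_of_colLen (by omega)

variable (lam h m)

/-- the partition obtained by removing the ribbon with top row `r`. -/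
noncomputable def subNu (r : ℕ) : YoungDiagram :=
  if hc : RemCond lam h m r then
    ofFn (remG lam h m r) (remG_anti hc) (r + h + 1 + lam.colLen 0) (remG_zero)
  else ⊥

variable {lam h m}

lemma subNu_rowLen {r : ℕ} (hc : RemCond lam h m r) (i : ℕ) :
    (subNu lam h m r).rowLen i = remG lam h m r i := by
  unfold subNu; rw [dif_pos hc]; exact rowLen_ofFn i

lemma subNu_struct {r : ℕ} (hc : RemCond lam h m r) :
    Struct (subNu lam h m r) lam r (r + h) := by
  obtain ⟨hf1, hf2⟩ := rem_facts hc
  have h1 := hc.1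
  have h2 := hc.2
  refine ⟨by omega, ?_, ?_, ?_⟩
  · intro i hi
    rcases hi with hi | hi
    · rw [subNu_rowLen hc, remG_lt hi]
    · rw [subNu_rowLen hc, remG_gt hi]
  · intro i hi1 hi2
    rw [subNu_rowLen hc]
    rcases lt_or_ge i (r + h) with c1 | c1
    · rw [remG_mid hi1 c1]
      have a1 : lam.rowLen (r + h) ≤ lam.rowLen (i + 1) := lam.rowLen_anti _ _ (by omega)
      have a2 : lam.rowLen (i + 1) ≤ lam.rowLen i := lam.rowLen_anti _ _ (by omega)
      omega
    · have e : i = r + h := by omega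
      rw [e, remG_s]
      omega
  · intro i hi1 hi2
    rw [subNu_rowLen hc, remG_mid hi1 hi2]
    have a1 : lam.rowLen (r + h) ≤ lam.rowLen (i + 1) := lam.rowLen_anti _ _ (by omega)
    omega

lemma subNu_ribbon {r : ℕ} (hc : RemCond lam h m r) : IsRibbon (subNu lam h m r) lam :=
  struct_ribbon (subNu_struct hc)

lemma subNu_height {r : ℕ} (hc : RemCond lam h m r) :
    skewHeight (subNu lam h m r) lam = h := by
  rw [struct_height (subNu_struct hc)]
  omega

lemma subNu_card {r : ℕ} (hc : RemCond lam h m r) :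
    (skewCells (subNu lam h m r) lam).card = h + m := by
  have := struct_card (subNu_struct hc)
  rw [subNu_rowLen hc, remG_s] at this
  obtain ⟨hf1, hf2⟩ := rem_facts hc
  omega

lemma removable_eq_subNu {ν : YoungDiagram} (hrib : IsRibbon ν lam)
    (hcard : (skewCells ν lam).card = h + m) (hht : skewHeight ν lam = h) :
    ∃ r, RemCond lam h m r ∧ ν = subNu lam h m r := by
  obtain ⟨r, s, hst⟩ := ribbon_struct hrib
  have hrs : r ≤ s := hst.1
  have hht' := struct_height hst
  have hcd := struct_card hst
  rw [hht] at hht'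
  have hs : s = r + h := by omega
  rw [hcard] at hcd
  have hocc := hst.2.2.1
  have hout := hst.2.1
  have hribb := hst.2.2.2
  -- ν.rowLen s + m = lam.rowLen r
  have hnus : ν.rowLen s + m = lam.rowLen r := by omega
  have hcond : RemCond lam h m r := by
    constructor
    · have a1 : ν.rowLen (s + 1) ≤ ν.rowLen s := ν.rowLen_anti _ _ (by omega)
      have a2 : lam.rowLen (s + 1) = ν.rowLen (s + 1) := hout (s + 1) (Or.inr (by omega))
      have e : r + h + 1 = s + 1 := by omega
      rw [e]
      omega
    · have a1 : ν.rowLen s < lam.rowLen s := hocc s (by omega) (le_refl _)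
      have e : r + h = s := by omega
      rw [e]
      omega
  refine ⟨r, hcond, ?_⟩
  apply yd_ext
  intro i
  rw [subNu_rowLen hcond]
  rcases lt_or_ge i r with c1 | c1
  · rw [remG_lt c1]
    exact (hout i (Or.inl c1)).symm
  rcases lt_or_ge i (r + h) with c2 | c2
  · rw [remG_mid c1 c2]
    have := hribb i c1 (by omega)
    omega
  rcases eq_or_lt_of_le c2 with c3 | c3
  · rw [← c3, remG_s]
    have e : ν.rowLen (r + h) = ν.rowLen s := by rw [hs]
    omega
  · rw [remG_gt c3]
    exact (hout i (Or.inr (by omega))).symm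

lemma subNu_inj {r r' : ℕ} (hc : RemCond lam h m r) (hc' : RemCond lam h m r')
    (he : subNu lam h m r = subNu lam h m r') : r = r' := by
  by_contra hne
  have key : ∀ r1 r2, r1 < r2 → RemCond lam h m r1 → RemCond lam h m r2 →
      subNu lam h m r1 ≠ subNu lam h m r2 := by
    intro r1 r2 hlt hc1 hc2 heq
    have e1 : (subNu lam h m r2).rowLen r1 = lam.rowLen r1 := by
      rw [subNu_rowLen hc2, remG_lt hlt]
    have e2 : (subNu lam h m r1).rowLen r1 < lam.rowLen r1 :=
      (subNu_struct hc1).2.2.1 r1 (le_refl _) (by omega)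
    rw [heq] at e2
    omega
  rcases lt_or_gt_of_ne hne with hlt | hlt
  · exact key r r' hlt hc hc' he
  · exact key r' r hlt hc' hc he.symm

end RemSide

variable (lam : YoungDiagram) (h m : ℕ)

/-- content sequence -/
def aseq : ℕ → ℤ := fun i => (lam.rowLen i : ℤ) - i

/-- big bound `M` -/
def Mb : ℕ := lam.rowLen 0 + lam.colLen 0 + h + m + 1

/-- bigger bound for the index range -/
def Rb : ℕ := lam.rowLen 0 + Mb lam h m + 2

/-- number of indices `i` with `aseq i ≥ c` -/
def fcnt (c : ℤ) : ℕ := ((range (Rb lam h m)).filter (fun i => c ≤ aseq lam i)).card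

variable {lam h m}

lemma aseq_strict {i j : ℕ} (hij : i < j) : aseq lam j < aseq lam i := by
  have := lam.rowLen_anti i j (le_of_lt hij)
  unfold aseq
  omega

lemma aseq_strict' {i j : ℕ} (hij : i < j) : aseq lam j + 1 ≤ aseq lam i :=
  aseq_strict hij

lemma aseq_lb (i : ℕ) : -(i : ℤ) ≤ aseq lam i := by
  unfold aseq; omega

lemma aseq_ub (i : ℕ) : aseq lam i ≤ (lam.rowLen 0 : ℤ) := by
  have := lam.rowLen_anti 0 i (Nat.zero_le _)
  unfold aseq; omega

lemma aseq_neg {i : ℕ} (hi : lam.colLen 0 ≤ i) : aseq lam i = -(i : ℤ) := by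
  unfold aseq; rw [rowLen_zero_of_colLen hi]; simp

/-- generic initial segment lemma -/
lemma seg_lemma (S : Finset ℕ) (R : ℕ) (hsub : S ⊆ range R)
    (hdc : ∀ i j, i ≤ j → j ∈ S → i ∈ S) : S = range S.card := by
  ext i
  constructor
  · intro hi
    have hsub2 : range (i + 1) ⊆ S := by
      intro j hj
      exact hdc j i (Nat.lt_succ_iff.mp (Finset.mem_range.1 hj)) hi
    have := Finset.card_le_card hsub2
    simp only [Finset.card_range] at this
    simp only [Finset.mem_range]
    omega
  · intro hi
    simp only [Finset.mem_range] at hi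
    by_contra hnot
    have hsub2 : S ⊆ range i := by
      intro j hj
      simp only [Finset.mem_range]
      by_contra hge
      exact hnot (hdc i j (by omega) hj)
    have := Finset.card_le_card hsub2
    simp only [Finset.card_range] at this
    omega

lemma lt_fcnt_iff {c : ℤ} {i : ℕ} (hi : i < Rb lam h m) :
    i < fcnt lam h m c ↔ c ≤ aseq lam i := by
  have hseg : (range (Rb lam h m)).filter (fun i => c ≤ aseq lam i)
      = range (fcnt lam h m c) := by
    apply seg_lemma _ (Rb lam h m) (Finset.filter_subset _ _)
    intro i j hij hj
    simp only [Finset.mem_filter, Finset.mem_range] at *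
    refine ⟨by omega, ?_⟩
    rcases eq_or_lt_of_le hij with rfl | hlt
    · exact hj.2
    · exact le_trans hj.2 (aseq_strict hlt).le
  constructor
  · intro hlt
    have : i ∈ range (fcnt lam h m c) := Finset.mem_range.2 hlt
    rw [← hseg] at this
    exact (Finset.mem_filter.1 this).2
  · intro hle
    have : i ∈ (range (Rb lam h m)).filter (fun i => c ≤ aseq lam i) :=
      Finset.mem_filter.2 ⟨Finset.mem_range.2 hi, hle⟩
    rw [hseg] at this
    exact Finset.mem_range.1 this

lemma fcnt_le_Rb (c : ℤ) : fcnt lam h m c ≤ Rb lam h m := by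
  have := Finset.card_le_card (Finset.filter_subset (fun i => c ≤ aseq lam i)
    (range (Rb lam h m)))
  simpa [fcnt] using this

lemma fcnt_mono {c c' : ℤ} (hcc : c ≤ c') : fcnt lam h m c' ≤ fcnt lam h m c := by
  apply Finset.card_le_card
  intro i hi
  simp only [Finset.mem_filter] at *
  exact ⟨hi.1, le_trans hcc hi.2⟩

lemma fcnt_neg_eval {c : ℤ} (h1 : -(Mb lam h m : ℤ) ≤ c) (h2 : c ≤ -(lam.colLen 0 : ℤ)) :
    (fcnt lam h m c : ℤ) = -c + 1 := by
  set t : ℕ := (-c).toNat with ht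
  have htc : (t : ℤ) = -c := Int.toNat_of_nonneg (by omega)
  have htL : lam.colLen 0 ≤ t := by omega
  have htM : t ≤ Mb lam h m := by omega
  have hRb : Mb lam h m + 2 ≤ Rb lam h m := by unfold Rb; omega
  have low : t < fcnt lam h m c := by
    rw [lt_fcnt_iff (by omega)]
    have := aseq_lb (lam := lam) t
    omega
  have high : ¬ (t + 1 < fcnt lam h m c) := by
    rw [lt_fcnt_iff (by omega)]
    rw [aseq_neg (by omega)]
    push_cast
    omega
  omega

lemma fcnt_top {c : ℤ} (h1 : (lam.rowLen 0 : ℤ) < c) : fcnt lam h m c = 0 := by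
  rw [fcnt, Finset.card_eq_zero, Finset.filter_eq_empty_iff]
  intro i _
  have := aseq_ub (lam := lam) i
  omega

lemma fcnt_step (c : ℤ) : fcnt lam h m c ≤ fcnt lam h m (c + 1) + 1 := by
  set t := fcnt lam h m (c + 1) with ht
  by_contra hcon
  push_neg at hcon
  have hRb : t + 1 < Rb lam h m := by
    have := fcnt_le_Rb (lam := lam) (h := h) (m := m) c
    omega
  have h1 : c ≤ aseq lam (t + 1) :=
    (lt_fcnt_iff (lam := lam) (h := h) (m := m) (by omega)).1 (by omega)
  have h2 : ¬ (c + 1 ≤ aseq lam t) := by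
    intro hle
    have := (lt_fcnt_iff (lam := lam) (h := h) (m := m) (c := c + 1) (i := t) (by omega)).2 hle
    omega
  have := aseq_strict' (lam := lam) (lt_add_one t)
  omega

lemma exists_aseq_eq {c : ℤ} (hlt : fcnt lam h m (c + 1) < fcnt lam h m c)
    (hRb : fcnt lam h m (c + 1) < Rb lam h m) :
    aseq lam (fcnt lam h m (c + 1)) = c := by
  set t := fcnt lam h m (c + 1) with ht
  have h1 : c ≤ aseq lam t := (lt_fcnt_iff hRb).1 hlt
  have h2 : ¬ (c + 1 ≤ aseq lam t) := by
    intro hle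
    have := (lt_fcnt_iff (c := c + 1) (i := t) hRb).2 hle
    omega
  omega

variable (lam h m)

/-- number of beads in the size-`h+m` window starting at `b`. -/
def Nz (b : ℤ) : ℤ := (fcnt lam h m b : ℤ) - (fcnt lam h m (b + (h + m)) : ℤ)

def CondA (b : ℤ) : Prop := Nz lam h m b = h + 1 ∧ Nz lam h m (b + 1) = h
def CondR (b : ℤ) : Prop := Nz lam h m b = h ∧ Nz lam h m (b + 1) = h + 1

instance : DecidablePred (CondA lam h m) := fun b => by unfold CondA; infer_instance
instance : DecidablePred (CondR lam h m) := fun b => by unfold CondR; infer_instance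

variable {lam h m}

lemma addCond_bound (hm : 1 ≤ m) {s : ℕ} (hc : AddCond lam h m s) :
    s < lam.colLen 0 + h + m := by
  by_contra hcon
  push_neg at hcon
  obtain ⟨h1, h2, h3⟩ := hc
  have hs : h < s := by omega
  have := h3 hs
  rw [rowLen_zero_of_colLen (μ := lam) (i := s - h - 1) (by omega)] at this
  omega

lemma remCond_bound (hm : 1 ≤ m) {r : ℕ} (hc : RemCond lam h m r) :
    r < lam.colLen 0 := by
  by_contra hcon
  push_neg at hcon
  obtain ⟨h1, h2⟩ := hc
  rw [rowLen_zero_of_colLen (μ := lam) (i := r) (by omega)] at h1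
  omega

lemma Mb_Rb : Mb lam h m + 2 ≤ Rb lam h m := by unfold Rb; omega

lemma colLen_lt_Mb : lam.rowLen 0 + lam.colLen 0 + h + m < Mb lam h m := by
  unfold Mb; omega

lemma addCond_condA (hm : 1 ≤ m) {s : ℕ} (hc : AddCond lam h m s) :
    CondA lam h m (aseq lam s) := by
  have hbd := addCond_bound hm hc
  have hMb := colLen_lt_Mb (lam := lam) (h := h) (m := m)
  have hRb := Mb_Rb (lam := lam) (h := h) (m := m)
  obtain ⟨h1, h2, h3⟩ := hc
  have hcast : ((s - h : ℕ) : ℤ) = (s : ℤ) - (h : ℤ) := by omega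
  have hcast2 : h < s → ((s - h - 1 : ℕ) : ℤ) = (s : ℤ) - (h : ℤ) - 1 := by omega
  -- f (a s) = s + 1
  have f1 : (fcnt lam h m (aseq lam s) : ℤ) = s + 1 := by
    have low : s < fcnt lam h m (aseq lam s) :=
      (lt_fcnt_iff (by omega)).2 (le_refl _)
    have high : ¬ (s + 1 < fcnt lam h m (aseq lam s)) := by
      rw [lt_fcnt_iff (by omega)]
      have := aseq_strict' (lam := lam) (lt_add_one s)
      omega
    omega
  -- f (a s + 1) = s
  have f2 : (fcnt lam h m (aseq lam s + 1) : ℤ) = s := by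
    have high : ¬ (s < fcnt lam h m (aseq lam s + 1)) := by
      rw [lt_fcnt_iff (by omega)]
      omega
    have low : s = 0 ∨ s - 1 < fcnt lam h m (aseq lam s + 1) := by
      rcases Nat.eq_zero_or_pos s with hz | hz
      · exact Or.inl hz
      · refine Or.inr ((lt_fcnt_iff (by omega)).2 ?_)
        have := aseq_strict' (lam := lam) (show s - 1 < s by omega)
        omega
    omega
  -- f (a s + (h+m)) = s - h
  have f3 : (fcnt lam h m (aseq lam s + (h + m)) : ℤ) = (s : ℤ) - h := by
    have high : ¬ (s - h < fcnt lam h m (aseq lam s + (h + m))) := by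
      rw [lt_fcnt_iff (by omega)]
      unfold aseq
      push_cast [hcast]
      omega
    have low : s - h = 0 ∨ s - h - 1 < fcnt lam h m (aseq lam s + (h + m)) := by
      rcases Nat.eq_zero_or_pos (s - h) with hz | hz
      · exact Or.inl hz
      · refine Or.inr ((lt_fcnt_iff (by omega)).2 ?_)
        have := h3 (by omega)
        unfold aseq
        push_cast [hcast2 (by omega)]
        omega
    omega
  -- f (a s + (h+m) + 1) = s - h
  have f4 : (fcnt lam h m (aseq lam s + (h + m) + 1) : ℤ) = (s : ℤ) - h := by
    have high : ¬ (s - h < fcnt lam h m (aseq lam s + (h + m) + 1)) := by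
      rw [lt_fcnt_iff (by omega)]
      unfold aseq
      push_cast [hcast]
      omega
    have low : s - h = 0 ∨ s - h - 1 < fcnt lam h m (aseq lam s + (h + m) + 1) := by
      rcases Nat.eq_zero_or_pos (s - h) with hz | hz
      · exact Or.inl hz
      · refine Or.inr ((lt_fcnt_iff (by omega)).2 ?_)
        have := h3 (by omega)
        unfold aseq
        push_cast [hcast2 (by omega)]
        omega
    omega
  constructor
  · unfold Nz
    rw [f1, f3]
    omega
  · unfold Nz
    have e : aseq lam s + 1 + ((h : ℤ) + m) = aseq lam s + ((h : ℤ) + m) + 1 := by ring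
    rw [e, f2, f4]
    omega

lemma condA_addCond (hm : 1 ≤ m) {b : ℤ} (hb1 : -(Mb lam h m : ℤ) ≤ b)
    (hcA : CondA lam h m b) : ∃ s : ℕ, AddCond lam h m s ∧ aseq lam s = b := by
  obtain ⟨hA1, hA2⟩ := hcA
  have hMb := colLen_lt_Mb (lam := lam) (h := h) (m := m)
  have hRb := Mb_Rb (lam := lam) (h := h) (m := m)
  have hfM : fcnt lam h m b ≤ Mb lam h m + 1 := by
    have h1 := fcnt_mono (lam := lam) (h := h) (m := m) hb1
    have h2 := fcnt_neg_eval (lam := lam) (h := h) (m := m)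
      (c := -(Mb lam h m : ℤ)) (by omega) (by unfold Mb; push_cast; omega)
    omega
  have d1 := fcnt_step (lam := lam) (h := h) (m := m) b
  have d1' := fcnt_mono (lam := lam) (h := h) (m := m) (show b ≤ b + 1 by omega)
  have d2 := fcnt_step (lam := lam) (h := h) (m := m) (b + (h + m))
  have d2' := fcnt_mono (lam := lam) (h := h) (m := m)
    (show b + (h + m) ≤ b + (h + m) + 1 by omega)
  have e : b + 1 + ((h : ℤ) + m) = b + ((h : ℤ) + m) + 1 := by ring
  unfold Nz at hA1 hA2
  rw [e] at hA2
  -- deduce exact steps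
  have step1 : fcnt lam h m b = fcnt lam h m (b + 1) + 1 := by omega
  have step2 : fcnt lam h m (b + (h + m)) = fcnt lam h m (b + (h + m) + 1) := by omega
  set s := fcnt lam h m (b + 1) with hs
  have hsRb : s + 1 < Rb lam h m := by omega
  have has : aseq lam s = b := exists_aseq_eq (by omega) (by omega)
  have hfk : (fcnt lam h m (b + (h + m)) : ℤ) = (s : ℤ) - h := by omega
  have hhs : h ≤ s := by omega
  have hcast : ((s - h : ℕ) : ℤ) = (s : ℤ) - (h : ℤ) := by omega
  have hcast2 : h < s → ((s - h - 1 : ℕ) : ℤ) = (s : ℤ) - (h : ℤ) - 1 := by omega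
  refine ⟨s, ⟨hhs, ?_, ?_⟩, has⟩
  · -- lam (s-h) < lam s + m
    have high : ¬ (s - h < fcnt lam h m (b + (h + m))) := by omega
    rw [lt_fcnt_iff (by omega)] at high
    unfold aseq at high has
    push_cast [hcast] at high ⊢
    omega
  · intro hlt
    have low : s - h - 1 < fcnt lam h m (b + (h + m) + 1) := by omega
    rw [lt_fcnt_iff (by omega)] at low
    unfold aseq at low has
    push_cast [hcast2 hlt] at low ⊢
    omega

lemma remCond_condR (hm : 1 ≤ m) {r : ℕ} (hc : RemCond lam h m r) :
    CondR lam h m (aseq lam r - (h + m)) := by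
  have hbd := remCond_bound hm hc
  have hMb := colLen_lt_Mb (lam := lam) (h := h) (m := m)
  have hRb := Mb_Rb (lam := lam) (h := h) (m := m)
  obtain ⟨h1, h2⟩ := hc
  set b := aseq lam r - ((h : ℤ) + m) with hb
  have ek : b + ((h : ℤ) + m) = aseq lam r := by rw [hb]; ring
  have ek1 : b + 1 + ((h : ℤ) + m) = aseq lam r + 1 := by rw [hb]; ring
  -- f (a r) = r + 1
  have f1 : (fcnt lam h m (aseq lam r) : ℤ) = r + 1 := by
    have low : r < fcnt lam h m (aseq lam r) :=
      (lt_fcnt_iff (by omega)).2 (le_refl _)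
    have high : ¬ (r + 1 < fcnt lam h m (aseq lam r)) := by
      rw [lt_fcnt_iff (by omega)]
      have := aseq_strict' (lam := lam) (lt_add_one r)
      omega
    omega
  have f2 : (fcnt lam h m (aseq lam r + 1) : ℤ) = r := by
    have high : ¬ (r < fcnt lam h m (aseq lam r + 1)) := by
      rw [lt_fcnt_iff (by omega)]
      omega
    have low : r = 0 ∨ r - 1 < fcnt lam h m (aseq lam r + 1) := by
      rcases Nat.eq_zero_or_pos r with hz | hz
      · exact Or.inl hz
      · refine Or.inr ((lt_fcnt_iff (by omega)).2 ?_)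
        have := aseq_strict' (lam := lam) (show r - 1 < r by omega)
        omega
    omega
  -- f b = r + h + 1 and f (b+1) = r + h + 1
  have key_low : b + 1 ≤ aseq lam (r + h) := by
    unfold aseq at *
    push_cast at *
    omega
  have key_high : aseq lam (r + h + 1) < b := by
    unfold aseq at *
    push_cast at *
    omega
  have f3 : (fcnt lam h m b : ℤ) = r + h + 1 := by
    have low : r + h < fcnt lam h m b :=
      (lt_fcnt_iff (by omega)).2 (by omega)
    have high : ¬ (r + h + 1 < fcnt lam h m b) := by
      rw [lt_fcnt_iff (by omega)]
      push_cast
      omega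
    omega
  have f4 : (fcnt lam h m (b + 1) : ℤ) = r + h + 1 := by
    have low : r + h < fcnt lam h m (b + 1) :=
      (lt_fcnt_iff (by omega)).2 (by omega)
    have high : ¬ (r + h + 1 < fcnt lam h m (b + 1)) := by
      rw [lt_fcnt_iff (by omega)]
      push_cast
      omega
    omega
  constructor
  · unfold Nz
    rw [ek, f3, f1]
    omega
  · unfold Nz
    rw [ek1, f4, f2]
    omega

lemma condR_remCond (hm : 1 ≤ m) {b : ℤ} (hb1 : -(Mb lam h m : ℤ) ≤ b)
    (hcR : CondR lam h m b) : ∃ r : ℕ, RemCond lam h m r ∧ aseq lam r - (h + m) = b := by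
  obtain ⟨hR1, hR2⟩ := hcR
  have hMb := colLen_lt_Mb (lam := lam) (h := h) (m := m)
  have hRb := Mb_Rb (lam := lam) (h := h) (m := m)
  have hfM : fcnt lam h m b ≤ Mb lam h m + 1 := by
    have h1 := fcnt_mono (lam := lam) (h := h) (m := m) hb1
    have h2 := fcnt_neg_eval (lam := lam) (h := h) (m := m)
      (c := -(Mb lam h m : ℤ)) (by omega) (by unfold Mb; push_cast; omega)
    omega
  have d1 := fcnt_step (lam := lam) (h := h) (m := m) b
  have d1' := fcnt_mono (lam := lam) (h := h) (m := m) (show b ≤ b + 1 by omega)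
  have d2 := fcnt_step (lam := lam) (h := h) (m := m) (b + (h + m))
  have d2' := fcnt_mono (lam := lam) (h := h) (m := m)
    (show b + (h + m) ≤ b + (h + m) + 1 by omega)
  have e : b + 1 + ((h : ℤ) + m) = b + ((h : ℤ) + m) + 1 := by ring
  unfold Nz at hR1 hR2
  rw [e] at hR2
  have step1 : fcnt lam h m b = fcnt lam h m (b + 1) := by omega
  have step2 : fcnt lam h m (b + (h + m)) = fcnt lam h m (b + (h + m) + 1) + 1 := by omega
  set r := fcnt lam h m (b + (h + m) + 1) with hr
  have hfb : (fcnt lam h m b : ℤ) = (r : ℤ) + h + 1 := by omega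
  have hrRb : r + h + 1 < Rb lam h m := by omega
  have har : aseq lam r = b + (h + m) := exists_aseq_eq (by omega) (by omega)
  -- translate
  have c2 : b + 1 ≤ aseq lam (r + h) := by
    have low : r + h < fcnt lam h m (b + 1) := by omega
    rw [lt_fcnt_iff (by omega)] at low
    exact low
  have c1 : aseq lam (r + h + 1) < b := by
    have high : ¬ (r + h + 1 < fcnt lam h m b) := by omega
    rw [lt_fcnt_iff (by omega)] at high
    omega
  refine ⟨r, ⟨?_, ?_⟩, by omega⟩
  · unfold aseq at har c1
    push_cast at har c1 ⊢
    omega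
  · unfold aseq at har c2
    push_cast at har c2 ⊢
    omega

section Telescope

variable (lam h m)

/-- indicator of the window count being above level h -/
noncomputable def Gz (b : ℤ) : ℤ := if (h : ℤ) + 1 ≤ Nz lam h m b then 1 else 0

variable {lam h m}

lemma Nz_nonneg (b : ℤ) : 0 ≤ Nz lam h m b := by
  unfold Nz
  have := fcnt_mono (lam := lam) (h := h) (m := m) (show b ≤ b + (h + m) by omega)
  omega

lemma Nz_step (b : ℤ) : Nz lam h m b ≤ Nz lam h m (b + 1) + 1 ∧
    Nz lam h m (b + 1) ≤ Nz lam h m b + 1 := by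
  have d1 := fcnt_step (lam := lam) (h := h) (m := m) b
  have d1' := fcnt_mono (lam := lam) (h := h) (m := m) (show b ≤ b + 1 by omega)
  have d2 := fcnt_step (lam := lam) (h := h) (m := m) (b + (h + m))
  have d2' := fcnt_mono (lam := lam) (h := h) (m := m)
    (show b + (h + m) ≤ b + (h + m) + 1 by omega)
  have e : b + 1 + ((h : ℤ) + m) = b + ((h : ℤ) + m) + 1 := by ring
  unfold Nz
  rw [e]
  omega

lemma Gz_step (b : ℤ) :
    Gz lam h m b - Gz lam h m (b + 1) =
      (if CondA lam h m b then (1 : ℤ) else 0) - (if CondR lam h m b then (1 : ℤ) else 0) := by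
  have hstep := Nz_step (lam := lam) (h := h) (m := m) b
  have hn1 := Nz_nonneg (lam := lam) (h := h) (m := m) b
  have hn2 := Nz_nonneg (lam := lam) (h := h) (m := m) (b + 1)
  by_cases cA : CondA lam h m b
  · have cR : ¬ CondR lam h m b := by
      obtain ⟨a1, a2⟩ := cA
      rintro ⟨r1, r2⟩
      omega
    rw [if_pos cA, if_neg cR]
    obtain ⟨a1, a2⟩ := cA
    unfold Gz
    rw [if_pos (by omega), if_neg (by omega)]
  · by_cases cR : CondR lam h m b
    · rw [if_neg cA, if_pos cR]
      obtain ⟨r1, r2⟩ := cR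
      unfold Gz
      rw [if_neg (by omega), if_pos (by omega)]
    · rw [if_neg cA, if_neg cR]
      unfold CondA at cA
      unfold CondR at cR
      unfold Gz
      by_cases g1 : (h : ℤ) + 1 ≤ Nz lam h m b
        <;> by_cases g2 : (h : ℤ) + 1 ≤ Nz lam h m (b + 1)
      · rw [if_pos g1, if_pos g2]; ring
      · exfalso; exact cA ⟨by omega, by omega⟩
      · exfalso; exact cR ⟨by omega, by omega⟩
      · rw [if_neg g1, if_neg g2]

lemma Gz_bot (hm : 1 ≤ m) : Gz lam h m (-(Mb lam h m : ℤ)) = 1 := by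
  have hMb := colLen_lt_Mb (lam := lam) (h := h) (m := m)
  have e1 := fcnt_neg_eval (lam := lam) (h := h) (m := m)
    (c := -(Mb lam h m : ℤ)) (by omega) (by push_cast; omega)
  have e2 := fcnt_neg_eval (lam := lam) (h := h) (m := m)
    (c := -(Mb lam h m : ℤ) + ((h : ℤ) + (m : ℤ)))
    (by push_cast; omega) (by unfold Mb; push_cast; omega)
  unfold Gz Nz
  rw [if_pos (by push_cast at e1 e2 ⊢; omega)]

lemma Gz_top : Gz lam h m (Mb lam h m : ℤ) = 0 := by
  have hMb := colLen_lt_Mb (lam := lam) (h := h) (m := m)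
  have e1 : fcnt lam h m (Mb lam h m : ℤ) = 0 :=
    fcnt_top (by push_cast; omega)
  have e2 := fcnt_mono (lam := lam) (h := h) (m := m)
    (show (Mb lam h m : ℤ) ≤ (Mb lam h m : ℤ) + (h + m) by omega)
  unfold Gz Nz
  rw [if_neg (by omega)]

lemma count_eq (hm : 1 ≤ m) :
    ((range (2 * Mb lam h m)).filter
        (fun j : ℕ => CondA lam h m (-(Mb lam h m : ℤ) + (j : ℤ)))).card
      = ((range (2 * Mb lam h m)).filter
        (fun j : ℕ => CondR lam h m (-(Mb lam h m : ℤ) + (j : ℤ)))).card + 1 := by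
  classical
  set M := Mb lam h m with hM
  set n := 2 * M with hn
  have tele : ∑ j ∈ range n,
      (Gz lam h m (-(M : ℤ) + (j : ℤ)) - Gz lam h m (-(M : ℤ) + ((j + 1 : ℕ) : ℤ))) = 1 := by
    rw [Finset.sum_range_sub' (fun j : ℕ => Gz lam h m (-(M : ℤ) + (j : ℤ))) n]
    have e0 : -(M : ℤ) + ((0 : ℕ) : ℤ) = -(M : ℤ) := by push_cast; ring
    have en : -(M : ℤ) + ((n : ℕ) : ℤ) = (M : ℤ) := by rw [hn]; push_cast; ring
    rw [e0, en, Gz_bot hm, Gz_top]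
    ring
  have stepsum : ∀ j : ℕ,
      Gz lam h m (-(M : ℤ) + (j : ℤ)) - Gz lam h m (-(M : ℤ) + ((j + 1 : ℕ) : ℤ)) =
      (if CondA lam h m (-(M : ℤ) + (j : ℤ)) then (1 : ℤ) else 0)
        - (if CondR lam h m (-(M : ℤ) + (j : ℤ)) then (1 : ℤ) else 0) := by
    intro j
    have e : -(M : ℤ) + ((j + 1 : ℕ) : ℤ) = (-(M : ℤ) + (j : ℤ)) + 1 := by push_cast; ring
    rw [e]
    exact Gz_step _
  rw [Finset.sum_congr rfl (fun j _ => stepsum j)] at tele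
  rw [Finset.sum_sub_distrib, Finset.sum_boole, Finset.sum_boole] at tele
  have : (((range n).filter (fun j : ℕ => CondA lam h m (-(M : ℤ) + (j : ℤ)))).card : ℤ)
      = (((range n).filter (fun j : ℕ => CondR lam h m (-(M : ℤ) + (j : ℤ)))).card : ℤ)
        + 1 := by
    omega
  exact_mod_cast this

end Telescope

-- E1
lemma natCard_subtype_eq_filter {p : ℕ → Prop} [DecidablePred p] {n : ℕ}
    (hb : ∀ s, p s → s < n) :
    Nat.card {s // p s} = ((range n).filter p).card := by
  have e : ∀ s : ℕ, p s ↔ s ∈ (range n).filter p := by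
    intro s
    simp only [Finset.mem_filter, Finset.mem_range]
    exact ⟨fun hp => ⟨hb s hp, hp⟩, fun hp => hp.2⟩
  rw [Nat.card_congr (Equiv.subtypeEquivRight e)]
  rw [Nat.card_eq_fintype_card, Fintype.card_coe]

-- E2 add
lemma natCard_add (lam : YoungDiagram) (h m : ℕ) (hm : 1 ≤ m) :
    Nat.card {μ : YoungDiagram // IsRibbon lam μ ∧
        (skewCells lam μ).card = h + m ∧ skewHeight lam μ = h}
      = Nat.card {s : ℕ // AddCond lam h m s} := by
  refine (Nat.card_eq_of_bijective
    (fun sp : {s : ℕ // AddCond lam h m s} =>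
      (⟨addMu lam h m sp.1, addMu_ribbon sp.2 hm, addMu_card sp.2, addMu_height sp.2⟩ :
        {μ : YoungDiagram // IsRibbon lam μ ∧
          (skewCells lam μ).card = h + m ∧ skewHeight lam μ = h})) ⟨?_, ?_⟩).symm
  · rintro ⟨s, hs⟩ ⟨s', hs'⟩ hss
    simp only [Subtype.mk.injEq] at hss
    exact Subtype.ext (addMu_inj hs hs' hss)
  · rintro ⟨μ, hrib, hcard, hht⟩
    obtain ⟨s, hc, he⟩ := addable_eq_addMu hrib hcard hht
    exact ⟨⟨s, hc⟩, Subtype.ext he.symm⟩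

-- E2 rem
lemma natCard_rem (lam : YoungDiagram) (h m : ℕ) (hm : 1 ≤ m) :
    Nat.card {ν : YoungDiagram // IsRibbon ν lam ∧
        (skewCells ν lam).card = h + m ∧ skewHeight ν lam = h}
      = Nat.card {r : ℕ // RemCond lam h m r} := by
  refine (Nat.card_eq_of_bijective
    (fun rp : {r : ℕ // RemCond lam h m r} =>
      (⟨subNu lam h m rp.1, subNu_ribbon rp.2, subNu_card rp.2, subNu_height rp.2⟩ :
        {ν : YoungDiagram // IsRibbon ν lam ∧
          (skewCells ν lam).card = h + m ∧ skewHeight ν lam = h})) ⟨?_, ?_⟩).symm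
  · rintro ⟨r, hr⟩ ⟨r', hr'⟩ hrr
    simp only [Subtype.mk.injEq] at hrr
    exact Subtype.ext (subNu_inj hr hr' hrr)
  · rintro ⟨ν, hrib, hcard, hht⟩
    obtain ⟨r, hc, he⟩ := removable_eq_subNu hrib hcard hht
    exact ⟨⟨r, hc⟩, Subtype.ext he.symm⟩

-- E3
lemma filter_add_eq (lam : YoungDiagram) (h m : ℕ) (hm : 1 ≤ m) :
    ((range (lam.colLen 0 + h + m)).filter (AddCond lam h m)).card
      = ((range (2 * Mb lam h m)).filter
        (fun j : ℕ => CondA lam h m (-(Mb lam h m : ℤ) + (j : ℤ)))).card := by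
  have hMb := colLen_lt_Mb (lam := lam) (h := h) (m := m)
  refine Finset.card_bij (fun s _ => (aseq lam s + Mb lam h m).toNat) ?_ ?_ ?_
  · intro s hs
    simp only [Finset.mem_filter, Finset.mem_range] at hs ⊢
    obtain ⟨hsr, hsc⟩ := hs
    have hlb := aseq_lb (lam := lam) s
    have hub := aseq_ub (lam := lam) s
    have hnn : (0 : ℤ) ≤ aseq lam s + Mb lam h m := by omega
    have hcast : ((aseq lam s + Mb lam h m).toNat : ℤ) = aseq lam s + Mb lam h m :=
      Int.toNat_of_nonneg hnn
    constructor
    · omega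
    · have he : -(Mb lam h m : ℤ) + ((aseq lam s + Mb lam h m).toNat : ℤ) = aseq lam s := by
        omega
      rw [he]
      exact addCond_condA hm hsc
  · intro s hs s' hs' he
    have he2 : (aseq lam s + (Mb lam h m : ℤ)).toNat
        = (aseq lam s' + (Mb lam h m : ℤ)).toNat := he
    simp only [Finset.mem_filter, Finset.mem_range] at hs hs'
    have hlb := aseq_lb (lam := lam) s
    have hlb' := aseq_lb (lam := lam) s'
    have h1 : ((aseq lam s + Mb lam h m).toNat : ℤ) = aseq lam s + Mb lam h m :=
      Int.toNat_of_nonneg (by omega)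
    have h2 : ((aseq lam s' + Mb lam h m).toNat : ℤ) = aseq lam s' + Mb lam h m :=
      Int.toNat_of_nonneg (by omega)
    have : aseq lam s = aseq lam s' := by omega
    by_contra hne
    rcases lt_or_gt_of_ne hne with hlt | hlt
    · have := aseq_strict (lam := lam) hlt
      omega
    · have := aseq_strict (lam := lam) hlt
      omega
  · intro j hj
    simp only [Finset.mem_filter, Finset.mem_range] at hj
    obtain ⟨hjn, hjA⟩ := hj
    obtain ⟨s, hsA, hse⟩ := condA_addCond hm (by omega) hjA
    have hbd := addCond_bound hm hsA
    refine ⟨s, ?_, ?_⟩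
    · simp only [Finset.mem_filter, Finset.mem_range]
      exact ⟨hbd, hsA⟩
    · show (aseq lam s + (Mb lam h m : ℤ)).toNat = j
      rw [hse]
      omega

-- E4
lemma filter_rem_eq (lam : YoungDiagram) (h m : ℕ) (hm : 1 ≤ m) :
    ((range (lam.colLen 0)).filter (RemCond lam h m)).card
      = ((range (2 * Mb lam h m)).filter
        (fun j : ℕ => CondR lam h m (-(Mb lam h m : ℤ) + (j : ℤ)))).card := by
  have hMb := colLen_lt_Mb (lam := lam) (h := h) (m := m)
  refine Finset.card_bij
    (fun r _ => (aseq lam r - (h + m) + Mb lam h m).toNat) ?_ ?_ ?_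
  · intro r hr
    simp only [Finset.mem_filter, Finset.mem_range] at hr ⊢
    obtain ⟨hrr, hrc⟩ := hr
    have hlb := aseq_lb (lam := lam) r
    have hub := aseq_ub (lam := lam) r
    have hcast : ((aseq lam r - (h + m) + Mb lam h m).toNat : ℤ)
        = aseq lam r - (h + m) + Mb lam h m := Int.toNat_of_nonneg (by omega)
    constructor
    · omega
    · have he : -(Mb lam h m : ℤ) + ((aseq lam r - (h + m) + Mb lam h m).toNat : ℤ)
          = aseq lam r - (h + m) := by omega
      rw [he]
      exact remCond_condR hm hrc
  · intro r hr r' hr' he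
    have he2 : (aseq lam r - ((h : ℤ) + m) + (Mb lam h m : ℤ)).toNat
        = (aseq lam r' - ((h : ℤ) + m) + (Mb lam h m : ℤ)).toNat := he
    simp only [Finset.mem_filter, Finset.mem_range] at hr hr'
    have hlb := aseq_lb (lam := lam) r
    have hlb' := aseq_lb (lam := lam) r'
    have h1 : ((aseq lam r - (h + m) + Mb lam h m).toNat : ℤ)
        = aseq lam r - (h + m) + Mb lam h m := Int.toNat_of_nonneg (by omega)
    have h2 : ((aseq lam r' - (h + m) + Mb lam h m).toNat : ℤ)
        = aseq lam r' - (h + m) + Mb lam h m := Int.toNat_of_nonneg (by omega)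
    have : aseq lam r = aseq lam r' := by omega
    by_contra hne
    rcases lt_or_gt_of_ne hne with hlt | hlt
    · have := aseq_strict (lam := lam) hlt
      omega
    · have := aseq_strict (lam := lam) hlt
      omega
  · intro j hj
    simp only [Finset.mem_filter, Finset.mem_range] at hj
    obtain ⟨hjn, hjR⟩ := hj
    obtain ⟨r, hrR, hre⟩ := condR_remCond hm (by omega) hjR
    have hbd := remCond_bound hm hrR
    refine ⟨r, ?_, ?_⟩
    · simp only [Finset.mem_filter, Finset.mem_range]
      exact ⟨hbd, hrR⟩
    · show (aseq lam r - ((h : ℤ) + m) + (Mb lam h m : ℤ)).toNat = j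
      rw [hre]
      omega

theorem main_count (lam : YoungDiagram) (h m : ℕ) (hm : 1 ≤ m) :
    Nat.card {μ : YoungDiagram // IsRibbon lam μ ∧
        (skewCells lam μ).card = h + m ∧ skewHeight lam μ = h} =
      Nat.card {ν : YoungDiagram // IsRibbon ν lam ∧
        (skewCells ν lam).card = h + m ∧ skewHeight ν lam = h} + 1 := by
  rw [natCard_add lam h m hm, natCard_rem lam h m hm,
    natCard_subtype_eq_filter (fun s hs => addCond_bound hm hs),
    natCard_subtype_eq_filter (fun r hr => remCond_bound hm hr),
    filter_add_eq lam h m hm, filter_rem_eq lam h m hm, count_eq hm]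


end SW

/-- Shimozono–White: for a partition `λ`, the number of addable ribbons of size
`k` and height `h` is one more than the number of removable ribbons of size `k`
and height `h`. -/
theorem stmt11 (lam : YoungDiagram) (k h : ℕ) (hk : 1 ≤ k) (hh : h ≤ k - 1) :
    Nat.card {μ : YoungDiagram // IsRibbon lam μ ∧
        (skewCells lam μ).card = k ∧ skewHeight lam μ = h} =
      Nat.card {ν : YoungDiagram // IsRibbon ν lam ∧
        (skewCells ν lam).card = k ∧ skewHeight ν lam = h} + 1 := by
  obtain ⟨m, rfl⟩ := Nat.exists_eq_add_of_le (show h ≤ k by omega)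
  exact SW.main_count lam h m (by omega)
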